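/- arXiv:1007.0984 — 2 statements merged into one kernel-verified Lean document; each statement's English description precedes it below -/
import Mathlib

section
/- Let r ∈ |F^×| and let f_1, f_2, W ∈ A^{m−1}(r)[z_m] be such that W = f_1·f_2 and W is a Weierstrass polynomial. Then there exist units u_1, u_2 of A^{m−1}(r) such that f_1/u_1 and f_2/u_2 are Weierstrass polynomials. -/
open MvPowerSeries Filter

set_option linter.unusedSectionVars false

namespace NA

variable (F : Type) [NormedField F] [IsUltrametricDist F]

/-- The value group `|F^×|` of a normed field, as a set of real numbers. -/
def VG : Set ℝ := {r | ∃ c : F, c ≠ 0 ∧ ‖c‖ = r}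

lemma VG.pos {r : ℝ} (hr : r ∈ VG F) : 0 < r := by
  obtain ⟨c, hc, rfl⟩ := hr
  exact norm_pos_iff.mpr hc

/-- The total degree `|γ|` of a multi-index. -/
def mdeg {m : ℕ} (γ : Fin m →₀ ℕ) : ℕ := γ.sum fun _ n => n

lemma mdeg_add {m : ℕ} (α β : Fin m →₀ ℕ) : mdeg (α + β) = mdeg α + mdeg β :=
  Finsupp.sum_add_index' (fun _ => rfl) (fun _ _ _ => rfl)

/-- The ring `A^m(r)` of power series converging on the closed ball of radius `r`:
those `f = Σ a_γ z^γ` with `|a_γ| r^{|γ|} → 0` as `|γ| → ∞`. -/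
def A (m : ℕ) (r : ℝ) : Subring (MvPowerSeries (Fin m) F) where
  carrier := {f | Tendsto (fun γ : Fin m →₀ ℕ => ‖coeff γ f‖ * r ^ mdeg γ)
    cofinite (nhds 0)}
  zero_mem' := by
    simp only [Set.mem_setOf_eq, map_zero, norm_zero, zero_mul]
    exact tendsto_const_nhds
  one_mem' := by
    refine tendsto_const_nhds.congr' ?_
    refine Filter.eventuallyEq_of_mem ((Set.finite_singleton (0 : Fin m →₀ ℕ)).compl_mem_cofinite) ?_
    intro γ hγ
    have : (γ : Fin m →₀ ℕ) ≠ 0 := by simpa using hγ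
    simp [MvPowerSeries.coeff_one, this]
  add_mem' := by
    intro f g hf hg
    simp only [Set.mem_setOf_eq] at hf hg ⊢
    rw [tendsto_zero_iff_abs_tendsto_zero] at hf hg ⊢
    refine squeeze_zero (fun γ => abs_nonneg _) (fun γ => ?_) (by simpa using hf.add hg)
    simp only [Function.comp_apply, abs_mul, abs_norm, abs_pow, map_add, ← add_mul]
    exact mul_le_mul_of_nonneg_right (norm_add_le _ _) (by positivity)
  neg_mem' := by
    intro f hf
    simpa only [Set.mem_setOf_eq, map_neg, norm_neg] using hf
  mul_mem' := by
    intro f g hf hg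
    simp only [Set.mem_setOf_eq] at hf hg ⊢
    rw [tendsto_zero_iff_abs_tendsto_zero] at hf hg ⊢
    have habs : ∀ (h : MvPowerSeries (Fin m) F),
        (abs ∘ fun γ : Fin m →₀ ℕ => ‖coeff γ h‖ * r ^ mdeg γ)
          = fun γ => ‖coeff γ h‖ * |r| ^ mdeg γ := by
      intro h; funext γ
      simp [Function.comp_apply, abs_mul, abs_pow]
    rw [habs] at hf hg ⊢
    set v := fun (h : MvPowerSeries (Fin m) F) (γ : Fin m →₀ ℕ) =>
      ‖coeff γ h‖ * |r| ^ mdeg γ with hv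
    have vnonneg : ∀ h γ, 0 ≤ v h γ := fun h γ => by positivity
    have finlt : ∀ (h : MvPowerSeries (Fin m) F),
        Tendsto (v h) cofinite (nhds 0) → ∀ δ : ℝ, 0 < δ → {γ | ¬ v h γ < δ}.Finite := by
      intro h hh δ hδ
      have := (Metric.tendsto_nhds.mp hh) δ hδ
      rw [Filter.eventually_cofinite] at this
      refine this.subset ?_
      intro γ hγ
      simp only [Set.mem_setOf_eq, Real.dist_eq, sub_zero] at *
      intro hc; exact hγ (lt_of_abs_lt hc)
    have bound : ∀ (h : MvPowerSeries (Fin m) F),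
        Tendsto (v h) cofinite (nhds 0) → ∃ M : ℝ, 1 ≤ M ∧ ∀ γ, v h γ ≤ M := by
      intro h hh
      have h1 := finlt h hh 1 one_pos
      refine ⟨1 + ∑ γ ∈ h1.toFinset, v h γ,
        le_add_of_nonneg_right (Finset.sum_nonneg fun γ _ => vnonneg h γ), ?_⟩
      intro γ
      by_cases hγ : γ ∈ h1.toFinset
      · have := Finset.single_le_sum (f := v h) (fun γ _ => vnonneg h γ) hγ
        linarith
      · simp only [Set.Finite.mem_toFinset, Set.mem_setOf_eq, not_not] at hγ
        have hs : (0:ℝ) ≤ ∑ γ ∈ h1.toFinset, v h γ :=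
          Finset.sum_nonneg fun γ _ => vnonneg h γ
        linarith
    rw [Metric.tendsto_nhds]
    intro ε hε
    rw [Filter.eventually_cofinite]
    obtain ⟨Mf, hMf1, hMf⟩ := bound f hf
    obtain ⟨Mg, hMg1, hMg⟩ := bound g hg
    set M := max Mf Mg with hMdef
    have hM1 : (1:ℝ) ≤ M := le_trans hMf1 (le_max_left _ _)
    have hM0 : (0:ℝ) < M := lt_of_lt_of_le one_pos hM1
    set δ := ε / M with hδdef
    have hδ0 : 0 < δ := div_pos hε hM0
    have hSf := finlt f hf δ hδ0
    have hSg := finlt g hg δ hδ0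
    refine ((hSf.prod hSg).image
      (fun p : (Fin m →₀ ℕ) × (Fin m →₀ ℕ) => p.1 + p.2)).subset ?_
    intro γ hγ
    simp only [Set.mem_setOf_eq, Real.dist_eq, sub_zero] at hγ
    have hγ' : ε ≤ v (f * g) γ := by
      rw [abs_of_nonneg (vnonneg (f*g) γ)] at hγ
      exact not_lt.mp hγ
    have hne : (Finset.HasAntidiagonal.antidiagonal γ).Nonempty := ⟨(γ, 0), by simp⟩
    obtain ⟨p, hp, hple⟩ := IsUltrametricDist.exists_norm_finset_sum_le_of_nonempty hne
      (fun p : (Fin m →₀ ℕ) × (Fin m →₀ ℕ) => coeff p.1 f * coeff p.2 g)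
    have hpsum : p.1 + p.2 = γ := Finset.HasAntidiagonal.mem_antidiagonal.mp hp
    have key : v (f * g) γ ≤ v f p.1 * v g p.2 := by
      have hdeg : mdeg γ = mdeg p.1 + mdeg p.2 := by
        rw [← hpsum, mdeg_add]
      calc v (f * g) γ = ‖coeff γ (f * g)‖ * |r| ^ mdeg γ := rfl
        _ ≤ ‖coeff p.1 f * coeff p.2 g‖ * |r| ^ mdeg γ := by
            refine mul_le_mul_of_nonneg_right ?_ (by positivity)
            rw [MvPowerSeries.coeff_mul]
            exact hple
        _ = (‖coeff p.1 f‖ * |r| ^ mdeg p.1) * (‖coeff p.2 g‖ * |r| ^ mdeg p.2) := by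
            rw [norm_mul, hdeg, pow_add]; ring
    refine ⟨p, ⟨?_, ?_⟩, hpsum⟩
    · simp only [Set.mem_setOf_eq, not_lt]
      have h1 : ε ≤ v f p.1 * M := by
        refine hγ'.trans (key.trans ?_)
        exact mul_le_mul_of_nonneg_left ((hMg p.2).trans (le_max_right _ _)) (vnonneg f p.1)
      exact (div_le_iff₀ hM0).mpr h1
    · simp only [Set.mem_setOf_eq, not_lt]
      have h1 : ε ≤ M * v g p.2 := by
        refine hγ'.trans (key.trans ?_)
        exact mul_le_mul_of_nonneg_right ((hMf p.1).trans (le_max_left _ _)) (vnonneg g p.2)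
      rw [hδdef, div_le_iff₀' hM0]
      exact h1

lemma mem_A_iff {m : ℕ} {r : ℝ} {f : MvPowerSeries (Fin m) F} :
    f ∈ A F m r ↔ Tendsto (fun γ : Fin m →₀ ℕ => ‖coeff γ f‖ * r ^ mdeg γ)
      cofinite (nhds 0) := Iff.rfl

instance {m : ℕ} : IsDomain (MvPowerSeries (Fin m) F) :=
  NoZeroDivisors.to_isDomain _

/-- The Gauss norm `|f|_r = sup_γ |a_γ| r^{|γ|}`. -/
noncomputable def nrm (r : ℝ) {m : ℕ} (f : MvPowerSeries (Fin m) F) : ℝ :=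
  ⨆ γ : Fin m →₀ ℕ, ‖coeff γ f‖ * r ^ mdeg γ

/-- For `0 < r ≤ R`, `A^m(R) ⊆ A^m(r)`. -/
lemma A_mono {m : ℕ} {r R : ℝ} (h0 : 0 < r) (hrR : r ≤ R) : A F m R ≤ A F m r := by
  intro f hf
  rw [mem_A_iff] at hf ⊢
  refine squeeze_zero (fun γ => by positivity) (fun γ => ?_) hf
  exact mul_le_mul_of_nonneg_left (pow_le_pow_left₀ h0.le hrR _) (norm_nonneg _)

/-- Evaluation of a power series at a point, as a (possibly junk) sum. -/
noncomputable def eval {m : ℕ} (f : MvPowerSeries (Fin m) F) (z : Fin m → F) : F :=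
  ∑' γ : Fin m →₀ ℕ, coeff γ f * ∏ i, z i ^ (γ i)

/-- The ring of integers `{a : |a| ≤ 1}` of `F`. -/
def O : Subring F where
  carrier := {a | ‖a‖ ≤ 1}
  zero_mem' := by simp
  one_mem' := by simp
  add_mem' := by
    intro a b ha hb
    exact (IsUltrametricDist.norm_add_le_max a b).trans (max_le ha hb)
  neg_mem' := by intro a ha; simpa using ha
  mul_mem' := by
    intro a b ha hb
    rw [Set.mem_setOf_eq, norm_mul]
    exact mul_le_one₀ ha (norm_nonneg b) hb

/-- The maximal ideal `{a : |a| < 1}` of the ring of integers. -/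
def mIdeal : Ideal (O F) where
  carrier := {a | ‖(a : F)‖ < 1}
  zero_mem' := by simp
  add_mem' := by
    intro a b ha hb
    exact lt_of_le_of_lt (IsUltrametricDist.norm_add_le_max (a : F) b) (max_lt ha hb)
  smul_mem' := by
    intro c a ha
    simp only [Set.mem_setOf_eq, smul_eq_mul] at ha ⊢
    rw [Subring.coe_mul, norm_mul]
    exact mul_lt_one_of_nonneg_of_lt_one_right c.2 (norm_nonneg _) ha

/-- The residue class field of `F`. -/
def Res := O F ⧸ mIdeal F

noncomputable instance : CommRing (Res F) := by unfold Res; infer_instance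

/-- Reduction of an element of absolute value at most `1` to the residue field. -/
noncomputable def red (a : F) (h : ‖a‖ ≤ 1) : Res F :=
  Ideal.Quotient.mk (mIdeal F) ⟨a, h⟩

/-- The ring of entire functions on `F^m`: power series lying in every `A^m(r)`. -/
def Ent (m : ℕ) : Subring (MvPowerSeries (Fin m) F) where
  carrier := {f | ∀ r ∈ VG F, f ∈ A F m r}
  zero_mem' := fun r _ => (A F m r).zero_mem
  one_mem' := fun r _ => (A F m r).one_mem
  add_mem' := fun hf hg r hr => (A F m r).add_mem (hf r hr) (hg r hr)
  neg_mem' := fun hf r hr => (A F m r).neg_mem (hf r hr)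
  mul_mem' := fun hf hg r hr => (A F m r).mul_mem (hf r hr) (hg r hr)

lemma mem_Ent_iff {m : ℕ} {f : MvPowerSeries (Fin m) F} :
    f ∈ Ent F m ↔ ∀ r ∈ VG F, f ∈ A F m r := Iff.rfl

/-- `d` is a greatest common divisor of the family `s`. -/
def IsGCDOf {α : Type*} [CommRing α] {ι : Type*} (d : α) (s : ι → α) : Prop :=
  (∀ i, d ∣ s i) ∧ ∀ e : α, (∀ i, e ∣ s i) → e ∣ d

section LastVariable

variable (m : ℕ)

/-- The subring of power series in `m+1` variables not depending on the last variable. -/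
def indepLast : Subring (MvPowerSeries (Fin (m+1)) F) where
  carrier := {f | ∀ γ : Fin (m+1) →₀ ℕ, γ (Fin.last m) ≠ 0 → coeff γ f = 0}
  zero_mem' := by intro γ _; simp
  one_mem' := by
    intro γ hγ
    have h : γ ≠ 0 := fun h => hγ (by simp [h])
    simp [MvPowerSeries.coeff_one, h]
  add_mem' := by
    intro f g hf hg γ hγ
    simp [map_add, hf γ hγ, hg γ hγ]
  neg_mem' := by
    intro f hf γ hγ
    simp [hf γ hγ]
  mul_mem' := by
    intro f g hf hg γ hγ
    rw [MvPowerSeries.coeff_mul]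
    refine Finset.sum_eq_zero fun p hp => ?_
    have hpsum : p.1 + p.2 = γ := Finset.HasAntidiagonal.mem_antidiagonal.mp hp
    by_cases h1 : p.1 (Fin.last m) = 0
    · have h2 : p.2 (Fin.last m) ≠ 0 := by
        intro h2
        apply hγ
        rw [← hpsum, Finsupp.add_apply, h1, h2]
      rw [hg p.2 h2, mul_zero]
    · rw [hf p.1 h1, zero_mul]

/-- The ring `A^{m-1}(r)`: analytic functions not depending on the last variable. -/
noncomputable def Aprev (r : ℝ) : Subring (MvPowerSeries (Fin (m+1)) F) :=
  A F (m+1) r ⊓ indepLast F m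

lemma Aprev_le (r : ℝ) : Aprev F m r ≤ A F (m+1) r := inf_le_left

lemma X_mem (r : ℝ) {k : ℕ} (i : Fin k) : (X i : MvPowerSeries (Fin k) F) ∈ A F k r := by
  rw [mem_A_iff]
  refine tendsto_const_nhds.congr' ?_
  refine Filter.eventuallyEq_of_mem
    ((Set.finite_singleton (Finsupp.single i 1)).compl_mem_cofinite) ?_
  intro γ hγ
  have h : γ ≠ Finsupp.single i 1 := by simpa using hγ
  simp [MvPowerSeries.X, MvPowerSeries.coeff_monomial, h]

/-- The last coordinate function `z_m` as an element of `A^m(r)`. -/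
noncomputable def zmA (r : ℝ) : A F (m+1) r :=
  ⟨X (Fin.last m), X_mem F r (Fin.last m)⟩

/-- Interpret a polynomial `W ∈ A^{m-1}(r)[z_m]` as an analytic function in `A^m(r)`. -/
noncomputable def toAm (r : ℝ) (W : Polynomial (Aprev F m r)) : A F (m+1) r :=
  Polynomial.eval₂ (Subring.inclusion (Aprev_le F m r)) (zmA F m r) W

/-- `W ∈ A^{m-1}(r)[z_m]` is a Weierstrass polynomial of degree `n = deg W`:
it is monic and `|W|_r = r^n`. -/
def IsWeierstrass (r : ℝ) (W : Polynomial (Aprev F m r)) : Prop :=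
  W.Monic ∧ nrm F r ((toAm F m r W : A F (m+1) r) : MvPowerSeries (Fin (m+1)) F)
    = r ^ W.natDegree

/-- The coefficient `A_j` of `z_m^j` when `f` is written as `Σ_j A_j(z') z_m^j`,
viewed as a power series not involving the last variable. -/
noncomputable def slice (f : MvPowerSeries (Fin (m+1)) F) (j : ℕ) :
    MvPowerSeries (Fin (m+1)) F :=
  fun γ => if γ (Fin.last m) = 0 then
    coeff (γ + Finsupp.single (Fin.last m) j) f else 0

/-- `f` is `z_m`-distinguished of degree `n` in `A^m(r)`: writing `f = Σ_j A_j z_m^j`,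
`A_n` is a unit in `A^{m-1}(r)`, `|f|_r = |A_n|_r r^n`, and `|A_j|_r r^j < |A_n|_r r^n`
for `j > n`. -/
def IsDistinguished (r : ℝ) (f : MvPowerSeries (Fin (m+1)) F) (n : ℕ) : Prop :=
  (∃ h : slice F m f n ∈ Aprev F m r, IsUnit (⟨slice F m f n, h⟩ : Aprev F m r)) ∧
  nrm F r f = nrm F r (slice F m f n) * r ^ n ∧
  ∀ j : ℕ, n < j → nrm F r (slice F m f j) * r ^ j < nrm F r (slice F m f n) * r ^ n

/-- The linear forms `z_i + u_i z_m` (and `z_m` for `i = m`) defining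
the change of variables `σ_u`. -/
noncomputable def linSub (u : Fin m → F) (i : Fin (m+1)) : MvPolynomial (Fin (m+1)) F :=
  MvPolynomial.X i + (if h : (i : ℕ) < m then
    MvPolynomial.C (u ⟨i, h⟩) * MvPolynomial.X (Fin.last m) else 0)

/-- The composition `f ∘ σ_u`, where
`σ_u(z_1,…,z_m) = (z_1 + u_1 z_m, …, z_{m-1} + u_{m-1} z_m, z_m)`. -/
noncomputable def sigmaSub (u : Fin m → F) (f : MvPowerSeries (Fin (m+1)) F) :
    MvPowerSeries (Fin (m+1)) F :=
  fun δ => ∑ t ∈ Finset.Nat.antidiagonalTuple (m+1) (mdeg δ),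
    coeff (Finsupp.equivFunOnFinite.symm t) f *
      MvPolynomial.coeff δ (∏ i, linSub F m u i ^ t i)

end LastVariable

/-- The formal partial derivative `∂f/∂z_j` of a power series. -/
noncomputable def pderiv {m : ℕ} (j : Fin m) (f : MvPowerSeries (Fin m) F) :
    MvPowerSeries (Fin m) F :=
  fun γ => ((γ j + 1 : ℕ) : F) * coeff (γ + Finsupp.single j 1) f

/-! ### Auxiliary lemmas for Statement 7 -/

lemma finite_ge {ι : Type*} {v : ι → ℝ} (hv : Tendsto v cofinite (nhds 0))
    {ε : ℝ} (hε : 0 < ε) : {γ | ε ≤ v γ}.Finite := by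
  have h := (Metric.tendsto_nhds.mp hv) ε hε
  rw [Filter.eventually_cofinite] at h
  refine h.subset fun γ hγ => ?_
  simp only [Set.mem_setOf_eq, Real.dist_eq, sub_zero] at *
  intro hc
  exact absurd (lt_of_abs_lt hc) (not_lt.mpr hγ)

lemma bddAbove_vv {m : ℕ} {r : ℝ} (hr : 0 ≤ r) {f : MvPowerSeries (Fin m) F}
    (hf : f ∈ A F m r) :
    BddAbove (Set.range fun γ : Fin m →₀ ℕ => ‖coeff γ f‖ * r ^ mdeg γ) := by
  set v := fun γ : Fin m →₀ ℕ => ‖coeff γ f‖ * r ^ mdeg γ with hv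
  have hnn : ∀ γ, 0 ≤ v γ := fun γ => by positivity
  have hfin : {γ | (1:ℝ) ≤ v γ}.Finite := finite_ge hf one_pos
  refine ⟨1 + ∑ γ ∈ hfin.toFinset, v γ, ?_⟩
  rintro x ⟨γ, rfl⟩
  by_cases hγ : γ ∈ hfin.toFinset
  · have := Finset.single_le_sum (f := v) (fun γ _ => hnn γ) hγ
    linarith
  · have h1 : v γ < 1 := by
      simp only [Set.Finite.mem_toFinset, Set.mem_setOf_eq, not_le] at hγ
      exact hγ
    have hs : (0:ℝ) ≤ ∑ γ ∈ hfin.toFinset, v γ := Finset.sum_nonneg fun γ _ => hnn γ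
    linarith

lemma le_nrm {m : ℕ} {r : ℝ} (hr : 0 ≤ r) {f : MvPowerSeries (Fin m) F}
    (hf : f ∈ A F m r) (γ : Fin m →₀ ℕ) :
    ‖coeff γ f‖ * r ^ mdeg γ ≤ nrm F r f :=
  le_ciSup (bddAbove_vv F hr hf) γ

lemma nrm_nonneg {m : ℕ} {r : ℝ} (hr : 0 ≤ r) {f : MvPowerSeries (Fin m) F}
    (hf : f ∈ A F m r) : 0 ≤ nrm F r f :=
  le_trans (by positivity) (le_nrm F hr hf 0)

/-- For nonzero `f`, the Gauss sup is attained, and at the `Lex`-least maximizer `γ₀`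
all lexicographically smaller indices give strictly smaller values. -/
lemma exists_max {m : ℕ} {r : ℝ} (hr : 0 < r) {f : MvPowerSeries (Fin m) F}
    (hf : f ∈ A F m r) (hf0 : f ≠ 0) :
    ∃ γ₀ : Fin m →₀ ℕ, ‖coeff γ₀ f‖ * r ^ mdeg γ₀ = nrm F r f ∧ 0 < nrm F r f ∧
      ∀ α : Fin m →₀ ℕ, toLex α < toLex γ₀ → ‖coeff α f‖ * r ^ mdeg α < nrm F r f := by
  set v := fun γ : Fin m →₀ ℕ => ‖coeff γ f‖ * r ^ mdeg γ with hv
  have hbdd := bddAbove_vv F hr.le hf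
  have hle : ∀ γ, v γ ≤ nrm F r f := fun γ => le_nrm F hr.le hf γ
  obtain ⟨γ₁, hγ₁⟩ : ∃ γ₁, coeff γ₁ f ≠ 0 := by
    by_contra h
    push_neg at h
    exact hf0 (MvPowerSeries.ext fun γ => by simp [h γ])
  have hv1 : 0 < v γ₁ := mul_pos (norm_pos_iff.mpr hγ₁) (pow_pos hr _)
  have hfin : {γ | v γ₁ ≤ v γ}.Finite := finite_ge hf hv1
  have hmemγ₁ : γ₁ ∈ hfin.toFinset := by
    simp only [Set.Finite.mem_toFinset, Set.mem_setOf_eq, le_refl]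
  have hTne : hfin.toFinset.Nonempty := ⟨γ₁, hmemγ₁⟩
  obtain ⟨γm, hγm, hγmax⟩ := hfin.toFinset.exists_mem_eq_sup' hTne v
  have hsup : nrm F r f = v γm := by
    refine le_antisymm (ciSup_le fun γ => ?_) (hle γm)
    by_cases hγ : γ ∈ hfin.toFinset
    · have h := Finset.le_sup' v hγ
      rw [hγmax] at h
      exact h
    · have h1 : v γ < v γ₁ := by
        simp only [Set.Finite.mem_toFinset, Set.mem_setOf_eq, not_le] at hγ
        exact hγ
      have h2 : v γ₁ ≤ v γm := by
        rw [← hγmax]; exact Finset.le_sup' v hmemγ₁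
      exact (h1.trans_le h2).le
  have hpos : 0 < nrm F r f := lt_of_lt_of_le hv1 (hle γ₁)
  have hMx : {γ | v γ = nrm F r f}.Finite := by
    refine hfin.subset fun γ hγ => ?_
    simp only [Set.mem_setOf_eq] at *
    rw [hγ]
    exact hle γ₁
  obtain ⟨γ₀, hγ₀, hmin⟩ := Set.exists_min_image _ toLex hMx ⟨γm, hsup.symm⟩
  refine ⟨γ₀, hγ₀, hpos, fun α hα => ?_⟩
  rcases (hle α).lt_or_eq with h | h
  · exact h
  · exact absurd (hmin α h) (not_le.mpr hα)

/-- The multiplicativity (Gauss lemma) direction needed: `|f|_r |g|_r ≤ |fg|_r`. -/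
lemma gauss_mul {m : ℕ} {r : ℝ} (hr : 0 < r) {f g : MvPowerSeries (Fin m) F}
    (hf : f ∈ A F m r) (hg : g ∈ A F m r) :
    nrm F r f * nrm F r g ≤ nrm F r (f * g) := by
  have hfg : f * g ∈ A F m r := (A F m r).mul_mem hf hg
  by_cases hf0 : f = 0
  · have : nrm F r f = 0 := by
      simp only [nrm, hf0, map_zero, norm_zero, zero_mul, ciSup_const]
    rw [this, zero_mul]
    exact nrm_nonneg F hr.le hfg
  by_cases hg0 : g = 0
  · have : nrm F r g = 0 := by
      simp only [nrm, hg0, map_zero, norm_zero, zero_mul, ciSup_const]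
    rw [this, mul_zero]
    exact nrm_nonneg F hr.le hfg
  obtain ⟨γ₀, hγ₀, hfpos, hγmin⟩ := exists_max F hr hf hf0
  obtain ⟨δ₀, hδ₀, hgpos, hδmin⟩ := exists_max F hr hg hg0
  set N := nrm F r f * nrm F r g with hN
  have hNpos : 0 < N := mul_pos hfpos hgpos
  set D := mdeg (γ₀ + δ₀) with hD
  have hrD : (0:ℝ) < r ^ D := pow_pos hr _
  have hterm : ‖coeff γ₀ f * coeff δ₀ g‖ * r ^ D = N := by
    rw [norm_mul, hD, mdeg_add, pow_add, hN, ← hγ₀, ← hδ₀]; ring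
  have ht₀pos : 0 < ‖coeff γ₀ f * coeff δ₀ g‖ := by
    nlinarith
  have hrest : ∀ p ∈ (Finset.HasAntidiagonal.antidiagonal (γ₀ + δ₀)).erase (γ₀, δ₀),
      ‖coeff p.1 f * coeff p.2 g‖ * r ^ D < N := by
    intro p hp
    obtain ⟨hpne, hpmem⟩ := Finset.mem_erase.mp hp
    have hsum : p.1 + p.2 = γ₀ + δ₀ := Finset.HasAntidiagonal.mem_antidiagonal.mp hpmem
    have hd : D = mdeg p.1 + mdeg p.2 := by rw [hD, ← hsum, mdeg_add]
    have hva : ‖coeff p.1 f‖ * r ^ mdeg p.1 ≤ nrm F r f := le_nrm F hr.le hf p.1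
    have hvb : ‖coeff p.2 g‖ * r ^ mdeg p.2 ≤ nrm F r g := le_nrm F hr.le hg p.2
    have hrw : ‖coeff p.1 f * coeff p.2 g‖ * r ^ D
        = (‖coeff p.1 f‖ * r ^ mdeg p.1) * (‖coeff p.2 g‖ * r ^ mdeg p.2) := by
      rw [norm_mul, hd, pow_add]; ring
    rw [hrw]
    rcases lt_trichotomy (toLex p.1) (toLex γ₀) with h | h | h
    · have h1 := hγmin p.1 h
      calc (‖coeff p.1 f‖ * r ^ mdeg p.1) * (‖coeff p.2 g‖ * r ^ mdeg p.2)
          ≤ (‖coeff p.1 f‖ * r ^ mdeg p.1) * nrm F r g :=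
            mul_le_mul_of_nonneg_left hvb (by positivity)
        _ < N := mul_lt_mul_of_pos_right h1 hgpos
    · have h1 : p.1 = γ₀ := toLex.injective h
      have h2 : p.2 = δ₀ := by
        rw [h1] at hsum
        exact add_left_cancel hsum
      exact absurd (Prod.ext h1 h2) hpne
    · have h2 : toLex p.2 < toLex δ₀ := by
        by_contra hc
        push_neg at hc
        have hlt : toLex γ₀ + toLex δ₀ < toLex p.1 + toLex p.2 :=
          add_lt_add_of_lt_of_le h hc
        have heq : toLex p.1 + toLex p.2 = toLex γ₀ + toLex δ₀ := congrArg toLex hsum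
        rw [heq] at hlt
        exact lt_irrefl _ hlt
      have h1 := hδmin p.2 h2
      calc (‖coeff p.1 f‖ * r ^ mdeg p.1) * (‖coeff p.2 g‖ * r ^ mdeg p.2)
          ≤ nrm F r f * (‖coeff p.2 g‖ * r ^ mdeg p.2) :=
            mul_le_mul_of_nonneg_right hva (by positivity)
        _ < N := mul_lt_mul_of_pos_left h1 hfpos
  -- the coefficient of `f*g` at `γ₀ + δ₀` has exactly the norm `N / r^D`
  have hmem : (γ₀, δ₀) ∈ Finset.HasAntidiagonal.antidiagonal (γ₀ + δ₀) := Finset.HasAntidiagonal.mem_antidiagonal.mpr rfl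
  set t₀ := coeff γ₀ f * coeff δ₀ g with ht₀
  set rest := ∑ p ∈ (Finset.HasAntidiagonal.antidiagonal (γ₀ + δ₀)).erase (γ₀, δ₀),
      coeff p.1 f * coeff p.2 g with hrestdef
  have hcoeff : coeff (γ₀ + δ₀) (f * g) = t₀ + rest := by
    rw [MvPowerSeries.coeff_mul, ← Finset.add_sum_erase _ _ hmem]
  have hrest_norm : ‖rest‖ < ‖t₀‖ := by
    rcases Finset.eq_empty_or_nonempty ((Finset.HasAntidiagonal.antidiagonal (γ₀ + δ₀)).erase (γ₀, δ₀)) with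
      he | hne
    · rw [hrestdef, he, Finset.sum_empty, norm_zero]
      exact ht₀pos
    · obtain ⟨p, hp, hple⟩ := IsUltrametricDist.exists_norm_finset_sum_le_of_nonempty hne
        (fun p : (Fin m →₀ ℕ) × (Fin m →₀ ℕ) => coeff p.1 f * coeff p.2 g)
      refine hple.trans_lt ?_
      have := hrest p hp
      rw [← hterm] at this
      exact lt_of_mul_lt_mul_right this hrD.le
  have hnorm_ge : ‖t₀‖ ≤ ‖coeff (γ₀ + δ₀) (f * g)‖ := by
    rw [hcoeff]
    by_contra hcon
    push_neg at hcon
    have hle1 : ‖(t₀ + rest) + (-rest)‖ ≤ max ‖t₀ + rest‖ ‖-rest‖ :=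
      IsUltrametricDist.norm_add_le_max _ _
    rw [add_neg_cancel_right, norm_neg] at hle1
    exact absurd (hle1.trans_lt (max_lt hcon hrest_norm)) (lt_irrefl _)
  calc N = ‖t₀‖ * r ^ D := hterm.symm
    _ ≤ ‖coeff (γ₀ + δ₀) (f * g)‖ * r ^ D :=
        mul_le_mul_of_nonneg_right hnorm_ge hrD.le
    _ ≤ nrm F r (f * g) := le_nrm F hr.le hfg (γ₀ + δ₀)

lemma mdeg_single {m : ℕ} (i : Fin m) (d : ℕ) : mdeg (Finsupp.single i d) = d := by
  unfold mdeg
  exact Finsupp.sum_single_index rfl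

lemma toAm_mul {m : ℕ} (r : ℝ) (p q : Polynomial (Aprev F m r)) :
    toAm F m r (p * q) = toAm F m r p * toAm F m r q :=
  Polynomial.eval₂_mul _ _

/-- The coefficient of `z_m^{deg g}` in `toAm g` for monic `g` is `1`. -/
lemma coeff_toAm_top {m : ℕ} {r : ℝ} {g : Polynomial (Aprev F m r)} (hg : g.Monic) :
    coeff (Finsupp.single (Fin.last m) g.natDegree)
      ((toAm F m r g : A F (m+1) r) : MvPowerSeries (Fin (m+1)) F) = 1 := by
  classical
  set φ : Aprev F m r →+* MvPowerSeries (Fin (m+1)) F :=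
    ((A F (m+1) r).subtype).comp (Subring.inclusion (Aprev_le F m r)) with hφ
  have hcoe : ((toAm F m r g : A F (m+1) r) : MvPowerSeries (Fin (m+1)) F)
      = Polynomial.eval₂ φ (X (Fin.last m)) g := by
    show (A F (m+1) r).subtype
      (Polynomial.eval₂ (Subring.inclusion (Aprev_le F m r)) (zmA F m r) g) = _
    rw [Polynomial.hom_eval₂]
    rfl
  have hmem : ∀ j : ℕ, ∀ γ : Fin (m+1) →₀ ℕ, γ (Fin.last m) ≠ 0 →
      coeff γ (φ (g.coeff j)) = 0 := by
    intro j
    have h : (g.coeff j : MvPowerSeries (Fin (m+1)) F) ∈ indepLast F m :=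
      (Subring.mem_inf.mp (g.coeff j).2).2
    exact h
  rw [hcoe, Polynomial.eval₂_eq_sum_range]
  rw [map_sum]
  have hX : ∀ j : ℕ, (X (Fin.last m) : MvPowerSeries (Fin (m+1)) F) ^ j
      = monomial (Finsupp.single (Fin.last m) j) 1 := fun j => MvPowerSeries.X_pow_eq _ j
  rw [Finset.sum_eq_single g.natDegree]
  · rw [hX, MvPowerSeries.coeff_mul_monomial, if_pos le_rfl, tsub_self, mul_one,
      hg.coeff_natDegree, map_one, MvPowerSeries.coeff_zero_one]
  · intro j hj hjd
    rw [Finset.mem_range] at hj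
    have hjd' : j ≤ g.natDegree := Nat.lt_succ_iff.mp hj
    rw [hX, MvPowerSeries.coeff_mul_monomial, if_pos]
    · have hsub : Finsupp.single (Fin.last m) g.natDegree - Finsupp.single (Fin.last m) j
          = Finsupp.single (Fin.last m) (g.natDegree - j) := Finsupp.single_tsub.symm
      rw [hsub, hmem j _ (by rw [Finsupp.single_eq_same]; omega), zero_mul]
    · exact Finsupp.single_le_iff.mpr (by rw [Finsupp.single_eq_same]; exact hjd')
  · intro hd'
    exact absurd (Finset.self_mem_range_succ g.natDegree) hd'

lemma nrm_toAm_ge {m : ℕ} {r : ℝ} (hr : 0 < r) {g : Polynomial (Aprev F m r)}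
    (hg : g.Monic) :
    r ^ g.natDegree ≤ nrm F r ((toAm F m r g : A F (m+1) r) : MvPowerSeries (Fin (m+1)) F) := by
  have h := le_nrm F hr.le (toAm F m r g).2 (Finsupp.single (Fin.last m) g.natDegree)
  rwa [coeff_toAm_top F hg, norm_one, one_mul, mdeg_single] at h

/-- A monic factor of a Weierstrass polynomial is Weierstrass. -/
lemma weier_factor {m : ℕ} {r : ℝ} (hr : 0 < r) {g₁ g₂ : Polynomial (Aprev F m r)}
    (h1 : g₁.Monic) (h2 : g₂.Monic)
    (hn : nrm F r ((toAm F m r (g₁ * g₂) : A F (m+1) r) : MvPowerSeries (Fin (m+1)) F)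
      = r ^ (g₁ * g₂).natDegree) :
    IsWeierstrass F m r g₁ := by
  have hd : (g₁ * g₂).natDegree = g₁.natDegree + g₂.natDegree :=
    Polynomial.natDegree_mul h1.ne_zero h2.ne_zero
  have hmul : ((toAm F m r (g₁ * g₂) : A F (m+1) r) : MvPowerSeries (Fin (m+1)) F)
      = ((toAm F m r g₁ : A F (m+1) r) : MvPowerSeries (Fin (m+1)) F)
      * ((toAm F m r g₂ : A F (m+1) r) : MvPowerSeries (Fin (m+1)) F) := by
    rw [toAm_mul]
    rfl
  have hge := gauss_mul F hr (toAm F m r g₁).2 (toAm F m r g₂).2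
  rw [← hmul, hn, hd, pow_add] at hge
  have hg1 := nrm_toAm_ge F hr h1
  have hg2 := nrm_toAm_ge F hr h2
  have hp1 : (0:ℝ) < r ^ g₁.natDegree := pow_pos hr _
  have hp2 : (0:ℝ) < r ^ g₂.natDegree := pow_pos hr _
  refine ⟨h1, le_antisymm ?_ hg1⟩
  nlinarith

/-- factors of a Weierstrass polynomial are, up to units of `A^{m-1}(r)`,
Weierstrass polynomials. -/
theorem statement7 [CompleteSpace F] [IsAlgClosed F]
    (hnt : ∃ c : F, c ≠ 0 ∧ ‖c‖ ≠ 1)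
    (m : ℕ) (r : ℝ) (hr : r ∈ VG F)
    (f₁ f₂ W : Polynomial (Aprev F m r)) (hW : IsWeierstrass F m r W)
    (hprod : W = f₁ * f₂) :
    ∃ u₁ u₂ : (Aprev F m r)ˣ,
      IsWeierstrass F m r (Polynomial.C ((u₁⁻¹ : (Aprev F m r)ˣ) : Aprev F m r) * f₁) ∧
      IsWeierstrass F m r (Polynomial.C ((u₂⁻¹ : (Aprev F m r)ˣ) : Aprev F m r) * f₂) := by
  obtain ⟨hWmon, hWnrm⟩ := hW
  have hr0 : 0 < r := VG.pos F hr
  set c₁ := f₁.leadingCoeff with hc₁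
  set c₂ := f₂.leadingCoeff with hc₂
  have hlc : c₁ * c₂ = 1 := by
    have h := hWmon
    rw [Polynomial.Monic, hprod, Polynomial.leadingCoeff_mul] at h
    exact h
  have hlc' : c₂ * c₁ = 1 := by rw [mul_comm]; exact hlc
  have hmon1 : (Polynomial.C c₂ * f₁).Monic := by
    rw [Polynomial.Monic, Polynomial.leadingCoeff_mul, Polynomial.leadingCoeff_C]
    rw [← hc₁, mul_comm]
    exact hlc
  have hmon2 : (Polynomial.C c₁ * f₂).Monic := by
    rw [Polynomial.Monic, Polynomial.leadingCoeff_mul, Polynomial.leadingCoeff_C]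
    rw [← hc₂]
    exact hlc
  have hgW : (Polynomial.C c₂ * f₁) * (Polynomial.C c₁ * f₂) = W := by
    have : (Polynomial.C c₂ * f₁) * (Polynomial.C c₁ * f₂)
        = Polynomial.C (c₂ * c₁) * (f₁ * f₂) := by
      rw [Polynomial.C_mul]; ring
    rw [this, hlc', map_one, one_mul, hprod]
  have hgW' : (Polynomial.C c₁ * f₂) * (Polynomial.C c₂ * f₁) = W := by
    rw [mul_comm]; exact hgW
  refine ⟨⟨c₁, c₂, hlc, hlc'⟩, ⟨c₂, c₁, hlc', hlc⟩, ?_, ?_⟩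
  · show IsWeierstrass F m r (Polynomial.C c₂ * f₁)
    refine weier_factor F hr0 hmon1 hmon2 ?_
    rw [hgW]
    exact hWnrm
  · show IsWeierstrass F m r (Polynomial.C c₁ * f₂)
    refine weier_factor F hr0 hmon2 hmon1 ?_
    rw [hgW']
    exact hWnrm

end NA
end

section
/- Let R ∈ |F^×| and let f_1, f_2 ∈ A^{m−1}(R)[z_m] be Weierstrass polynomials that are relatively prime as elements of A^m(R) (i.e., every common divisor of f_1 and f_2 in A^m(R) is a unit). Then f_1 and f_2 are relatively prime in the polynomial ring A^{m−1}(R)[z_m]. -/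
open MvPowerSeries Filter

set_option linter.unusedSectionVars false

namespace NA

variable (F : Type) [NormedField F] [IsUltrametricDist F]

section Proof11

variable {F}

lemma bddAbove_of_tendsto_cofinite {α : Type*} {v : α → ℝ} (h0 : ∀ x, 0 ≤ v x)
    (h : Tendsto v cofinite (nhds 0)) : BddAbove (Set.range v) := by
  have h1 : {x | ¬ v x < 1}.Finite := by
    have := h.eventually_lt_const one_pos
    rwa [Filter.eventually_cofinite] at this
  refine ⟨1 + ∑ x ∈ h1.toFinset, v x, ?_⟩
  rintro r ⟨x, rfl⟩
  by_cases hx : x ∈ h1.toFinset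
  · have h2 := Finset.single_le_sum (f := v) (fun y _ => h0 y) hx
    linarith
  · simp only [Set.Finite.mem_toFinset, Set.mem_setOf_eq, not_not] at hx
    have h3 : (0:ℝ) ≤ ∑ y ∈ h1.toFinset, v y := Finset.sum_nonneg fun y _ => h0 y
    linarith

lemma coeff_le_nrm {k : ℕ} {R : ℝ} (hr : 0 ≤ R) {f : MvPowerSeries (Fin k) F}
    (hf : f ∈ A F k R) (γ : Fin k →₀ ℕ) :
    ‖coeff γ f‖ * R ^ mdeg γ ≤ nrm F R f :=
  le_ciSup (bddAbove_of_tendsto_cofinite (fun δ => by positivity) hf) γ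

lemma mdeg_single_s11 (m j : ℕ) : mdeg (Finsupp.single (Fin.last m) j) = j :=
  Finsupp.sum_single_index rfl

lemma mem_indepLast_iff {m : ℕ} {f : MvPowerSeries (Fin (m+1)) F} :
    f ∈ indepLast F m ↔
      ∀ γ : Fin (m+1) →₀ ℕ, γ (Fin.last m) ≠ 0 → coeff γ f = 0 := Iff.rfl

/-- Restriction to the last coordinate axis, as a ring hom to `F[[z]]`. -/
noncomputable def lastAxis (m : ℕ) : MvPowerSeries (Fin (m+1)) F →+* PowerSeries F where
  toFun f := PowerSeries.mk fun j => coeff (Finsupp.single (Fin.last m) j) f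
  map_zero' := by ext j; simp
  map_one' := by
    ext j
    simp [PowerSeries.coeff_one, MvPowerSeries.coeff_one, Finsupp.single_eq_zero]
  map_add' f g := by ext j; simp
  map_mul' f g := by
    ext j
    simp [PowerSeries.coeff_mul, MvPowerSeries.coeff_mul, Finsupp.antidiagonal_single,
      Finset.sum_map]

lemma coeff_lastAxis (m j : ℕ) (f : MvPowerSeries (Fin (m+1)) F) :
    PowerSeries.coeff j (lastAxis m f) = coeff (Finsupp.single (Fin.last m) j) f := by
  simp only [lastAxis, RingHom.coe_mk, MonoidHom.coe_mk, OneHom.coe_mk, PowerSeries.coeff_mk]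

/-- Reduction of coefficients: evaluate an element of `A^{m-1}(R)` at the origin. -/
noncomputable def psiR (m : ℕ) (R : ℝ) : Aprev F m R →+* F :=
  (MvPowerSeries.constantCoeff).comp (Aprev F m R).subtype

lemma lastAxis_coe_Aprev {m : ℕ} {R : ℝ} (a : Aprev F m R) :
    lastAxis m (a : MvPowerSeries (Fin (m+1)) F) = PowerSeries.C (psiR m R a) := by
  have hind : ∀ γ : Fin (m+1) →₀ ℕ, γ (Fin.last m) ≠ 0 →
      coeff γ (a : MvPowerSeries (Fin (m+1)) F) = 0 :=
    (Subring.mem_inf.mp a.2).2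
  ext j
  rw [coeff_lastAxis, PowerSeries.coeff_C]
  cases j with
  | zero =>
      rw [if_pos rfl, Finsupp.single_zero, MvPowerSeries.coeff_zero_eq_constantCoeff_apply]
      rfl
  | succ n =>
      rw [hind (Finsupp.single (Fin.last m) (n+1)) (by simp)]
      simp

lemma lastAxis_X (m : ℕ) :
    lastAxis m (X (Fin.last m) : MvPowerSeries (Fin (m+1)) F) = PowerSeries.X := by
  ext j
  rw [coeff_lastAxis, MvPowerSeries.coeff_X, PowerSeries.coeff_X]
  by_cases hj : j = 1
  · simp [hj]
  · rw [if_neg, if_neg hj]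
    intro h
    apply hj
    have := DFunLike.congr_fun h (Fin.last m)
    simpa using this

lemma lastAxis_toAm {m : ℕ} {R : ℝ} (W : Polynomial (Aprev F m R)) :
    lastAxis m ((toAm F m R W : A F (m+1) R) : MvPowerSeries (Fin (m+1)) F)
      = ((W.map (psiR m R) : Polynomial F) : PowerSeries F) := by
  have h1 : ((toAm F m R W : A F (m+1) R) : MvPowerSeries (Fin (m+1)) F)
      = Polynomial.eval₂ ((A F (m+1) R).subtype.comp (Subring.inclusion (Aprev_le F m R)))
          (X (Fin.last m)) W :=
    Polynomial.hom_eval₂ W (Subring.inclusion (Aprev_le F m R)) (A F (m+1) R).subtype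
      (zmA F m R)
  rw [h1, Polynomial.hom_eval₂, lastAxis_X]
  have h2 : (lastAxis m).comp
        ((A F (m+1) R).subtype.comp (Subring.inclusion (Aprev_le F m R)))
      = (PowerSeries.C).comp (psiR m R) :=
    RingHom.ext fun a => lastAxis_coe_Aprev a
  rw [h2, ← Polynomial.eval₂_map, Polynomial.eval₂_C_X_eq_coe]

lemma lastAxis_tendsto {m : ℕ} {R : ℝ} {f : MvPowerSeries (Fin (m+1)) F}
    (hf : f ∈ A F (m+1) R) :
    Tendsto (fun j : ℕ => ‖PowerSeries.coeff j (lastAxis m f)‖ * R ^ j)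
      cofinite (nhds 0) := by
  have hinj : Function.Injective fun j : ℕ => Finsupp.single (Fin.last m) j :=
    Finsupp.single_injective _
  have h := (mem_A_iff F).mp hf
  refine (h.comp hinj.tendsto_cofinite).congr fun j => ?_
  simp [Function.comp, coeff_lastAxis, mdeg_single_s11]

lemma C_mem_A (k : ℕ) (r : ℝ) (a : F) : (MvPowerSeries.C a) ∈ A F k r := by
  rw [mem_A_iff]
  refine tendsto_const_nhds.congr' ?_
  refine Filter.eventuallyEq_of_mem
    ((Set.finite_singleton (0 : Fin k →₀ ℕ)).compl_mem_cofinite) ?_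
  intro γ hγ
  have : (γ : Fin k →₀ ℕ) ≠ 0 := by simpa using hγ
  simp [MvPowerSeries.coeff_C, this]

/-- Constants embed into `A^{m-1}(R)`. -/
noncomputable def constAprev (m : ℕ) (R : ℝ) : F →+* Aprev F m R where
  toFun a := ⟨MvPowerSeries.C a, by
    rw [Aprev, Subring.mem_inf]
    refine ⟨C_mem_A _ _ a, mem_indepLast_iff.mpr fun γ hγ => ?_⟩
    have : γ ≠ 0 := fun h => hγ (by simp [h])
    simp [MvPowerSeries.coeff_C, this]⟩
  map_one' := by apply Subtype.ext; simp
  map_mul' a b := by apply Subtype.ext; simp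
  map_zero' := by apply Subtype.ext; simp
  map_add' a b := by apply Subtype.ext; simp

lemma psiR_constAprev {m : ℕ} {R : ℝ} (a : F) : psiR m R (constAprev m R a) = a := by
  simp [psiR, constAprev]

lemma roots_le_of_coeff_le {P : Polynomial F} (hP : P.Monic) {R : ℝ} (hR : 0 < R)
    (hcoeff : ∀ j : ℕ, ‖P.coeff j‖ * R ^ j ≤ R ^ P.natDegree)
    {c : F} (hc : P.eval c = 0) : ‖c‖ ≤ R := by
  by_contra hcR
  push_neg at hcR
  have hc0 : 0 < ‖c‖ := lt_trans hR hcR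
  set n := P.natDegree with hn
  have hn0 : n ≠ 0 := by
    intro h
    have : P = 1 := (Polynomial.Monic.natDegree_eq_zero hP).mp h
    rw [this] at hc
    simp at hc
  have heval : P.eval c = ∑ i ∈ Finset.range (n+1), P.coeff i * c ^ i := by
    rw [Polynomial.eval_eq_sum_range]
  have hsplit : (∑ i ∈ Finset.range n, P.coeff i * c ^ i) + c ^ n = 0 := by
    have := Finset.sum_range_succ (fun i => P.coeff i * c ^ i) n
    rw [this] at heval
    have hlc : P.coeff n = 1 := hP.coeff_natDegree
    rw [hlc, one_mul] at heval
    rw [← heval, hc]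
  have hne : (Finset.range n).Nonempty := ⟨0, Finset.mem_range.mpr (Nat.pos_of_ne_zero hn0)⟩
  obtain ⟨j, hj, hle⟩ := IsUltrametricDist.exists_norm_finset_sum_le_of_nonempty hne
    (fun i => P.coeff i * c ^ i)
  have hjn : j < n := Finset.mem_range.mp hj
  have hcn : ‖c‖ ^ n ≤ ‖P.coeff j‖ * ‖c‖ ^ j := by
    have h1 : c ^ n = -∑ i ∈ Finset.range n, P.coeff i * c ^ i := by
      rw [eq_neg_iff_add_eq_zero, add_comm]
      exact hsplit
    calc ‖c‖ ^ n = ‖c ^ n‖ := (norm_pow c n).symm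
      _ = ‖∑ i ∈ Finset.range n, P.coeff i * c ^ i‖ := by rw [h1, norm_neg]
      _ ≤ ‖P.coeff j * c ^ j‖ := hle
      _ = ‖P.coeff j‖ * ‖c‖ ^ j := by rw [norm_mul, norm_pow]
  have hcj : ‖P.coeff j‖ ≤ R ^ (n - j) := by
    have h2 : (0:ℝ) < R ^ j := pow_pos hR j
    have h3 : R ^ (n - j) * R ^ j = R ^ n := by
      rw [← pow_add, Nat.sub_add_cancel hjn.le]
    have := hcoeff j
    rw [← h3] at this
    calc ‖P.coeff j‖ = ‖P.coeff j‖ * R ^ j / R ^ j := by field_simp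
      _ ≤ R ^ (n - j) * R ^ j / R ^ j := by
          apply div_le_div_of_nonneg_right this h2.le
      _ = R ^ (n - j) := by field_simp
  have hlt : R ^ (n - j) < ‖c‖ ^ (n - j) :=
    pow_lt_pow_left₀ hcR hR.le (Nat.sub_ne_zero_of_lt hjn)
  have hfin : ‖c‖ ^ n < ‖c‖ ^ n := by
    calc ‖c‖ ^ n ≤ ‖P.coeff j‖ * ‖c‖ ^ j := hcn
      _ ≤ R ^ (n - j) * ‖c‖ ^ j :=
          mul_le_mul_of_nonneg_right hcj (by positivity)
      _ < ‖c‖ ^ (n - j) * ‖c‖ ^ j :=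
          mul_lt_mul_of_pos_right hlt (by positivity)
      _ = ‖c‖ ^ n := by rw [← pow_add, Nat.sub_add_cancel hjn.le]
  exact absurd hfin (lt_irrefl _)

end Proof11

/-- Weierstrass polynomials relatively prime in `A^m(R)` are
relatively prime in `A^{m-1}(R)[z_m]`. -/
theorem statement11 [CompleteSpace F] [IsAlgClosed F]
    (hnt : ∃ c : F, c ≠ 0 ∧ ‖c‖ ≠ 1)
    (m : ℕ) (R : ℝ) (hR : R ∈ VG F)
    (f₁ f₂ : Polynomial (Aprev F m R))
    (h₁ : IsWeierstrass F m R f₁) (h₂ : IsWeierstrass F m R f₂)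
    (hrel : IsRelPrime (toAm F m R f₁) (toAm F m R f₂)) :
    IsRelPrime f₁ f₂ := by
  have hR0 : 0 < R := VG.pos F hR
  intro d hd1 hd2
  obtain ⟨q₁, hq₁⟩ := hd1
  obtain ⟨q₂, hq₂⟩ := hd2
  have hdvd1 : toAm F m R d ∣ toAm F m R f₁ :=
    ⟨toAm F m R q₁, by rw [hq₁]; simp only [toAm]; rw [Polynomial.eval₂_mul]⟩
  have hdvd2 : toAm F m R d ∣ toAm F m R f₂ :=
    ⟨toAm F m R q₂, by rw [hq₂]; simp only [toAm]; rw [Polynomial.eval₂_mul]⟩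
  have hu : IsUnit (toAm F m R d) := hrel hdvd1 hdvd2
  have hlc : IsUnit d.leadingCoeff := by
    have hm : (d * q₁).leadingCoeff = 1 := by rw [← hq₁]; exact h₁.1.leadingCoeff
    rw [Polynomial.leadingCoeff_mul] at hm
    exact IsUnit.of_mul_eq_one _ hm
  rcases eq_or_ne d.natDegree 0 with hk | hk
  · rw [Polynomial.eq_C_of_natDegree_eq_zero hk]
    rw [Polynomial.leadingCoeff, hk] at hlc
    exact Polynomial.isUnit_C.mpr hlc
  · exfalso
    set ψ := psiR (F := F) m R with hψ
    set D := d.map ψ with hD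
    have hψlc : ψ d.leadingCoeff ≠ 0 := (hlc.map ψ).ne_zero
    have hDdeg : D.natDegree = d.natDegree :=
      Polynomial.natDegree_map_of_leadingCoeff_ne_zero ψ hψlc
    have hDne : D.degree ≠ 0 := fun h => hk (by
      rw [← hDdeg]
      exact Polynomial.natDegree_eq_zero_iff_degree_le_zero.mpr h.le)
    obtain ⟨c, hc⟩ := IsAlgClosed.exists_root D hDne
    have hDc : D.eval c = 0 := hc
    -- all roots of F₁ have norm at most R
    set F₁ := f₁.map ψ with hF₁
    have hF₁monic : F₁.Monic := h₁.1.map ψ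
    have hF₁deg : F₁.natDegree = f₁.natDegree := h₁.1.natDegree_map ψ
    have hF₁coeff : ∀ j : ℕ, ‖F₁.coeff j‖ * R ^ j ≤ R ^ F₁.natDegree := by
      intro j
      have e1 : F₁.coeff j = coeff (Finsupp.single (Fin.last m) j)
          ((toAm F m R f₁ : A F (m+1) R) : MvPowerSeries (Fin (m+1)) F) := by
        rw [← coeff_lastAxis, lastAxis_toAm, Polynomial.coeff_coe]
      rw [e1, hF₁deg, ← h₁.2]
      have h5 := coeff_le_nrm (F := F) hR0.le (toAm F m R f₁).2
        (Finsupp.single (Fin.last m) j)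
      rwa [mdeg_single_s11] at h5
    have hF₁eval : F₁.eval c = 0 := by
      have h6 : F₁ = D * q₁.map ψ := by rw [hF₁, hq₁, Polynomial.map_mul]
      rw [h6, Polynomial.eval_mul, hDc, zero_mul]
    have hcR : ‖c‖ ≤ R := roots_le_of_coeff_le hF₁monic hR0 hF₁coeff hF₁eval
    -- the inverse of toAm d in A(R)
    obtain ⟨e, he⟩ := hu.exists_right_inv
    have heMv : ((toAm F m R d : A F (m+1) R) : MvPowerSeries (Fin (m+1)) F)
        * ((e : A F (m+1) R) : MvPowerSeries (Fin (m+1)) F) = 1 := by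
      have h7 := congrArg (fun x : A F (m+1) R => (x : MvPowerSeries (Fin (m+1)) F)) he
      simpa using h7
    set E := lastAxis m ((e : A F (m+1) R) : MvPowerSeries (Fin (m+1)) F) with hE
    have hPS : (D : PowerSeries F) * E = 1 := by
      have h8 := congrArg (lastAxis (F := F) m) heMv
      rw [map_mul, map_one, lastAxis_toAm] at h8
      exact h8
    -- factor out the root
    obtain ⟨Hp, hHp⟩ := Polynomial.dvd_iff_isRoot.mpr hc
    set u := (Hp : PowerSeries F) * E with hu'
    have hunit : (PowerSeries.X - PowerSeries.C c) * u = 1 := by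
      have hcoe : ((Polynomial.X - Polynomial.C c : Polynomial F) : PowerSeries F)
          = PowerSeries.X - PowerSeries.C c := by
        rw [Polynomial.coe_sub, Polynomial.coe_X, Polynomial.coe_C]
      rw [hu', ← mul_assoc, ← hcoe, ← Polynomial.coe_mul, ← hHp, hPS]
    -- coefficients of u
    have hcoeff0 : -(c * PowerSeries.coeff 0 u) = 1 := by
      have h9 := congrArg (PowerSeries.coeff 0) hunit
      rw [sub_mul, map_sub, PowerSeries.coeff_zero_X_mul, PowerSeries.coeff_C_mul,
        zero_sub, PowerSeries.coeff_one] at h9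
      simpa using h9
    have hc0 : c ≠ 0 := by
      intro h0
      rw [h0] at hcoeff0
      simp at hcoeff0
    have hrec : ∀ j : ℕ, PowerSeries.coeff (j+1) u = c⁻¹ * PowerSeries.coeff j u := by
      intro j
      have h10 := congrArg (PowerSeries.coeff (j+1)) hunit
      rw [sub_mul, map_sub, PowerSeries.coeff_succ_X_mul, PowerSeries.coeff_C_mul,
        PowerSeries.coeff_one, if_neg (Nat.succ_ne_zero j)] at h10
      field_simp
      linear_combination -h10
    have hval : ∀ j : ℕ, PowerSeries.coeff j u = -(c⁻¹ ^ (j+1)) := by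
      intro j
      induction j with
      | zero =>
          apply mul_left_cancel₀ hc0
          have h13 : c * PowerSeries.coeff 0 u = -1 := by linear_combination -hcoeff0
          rw [h13, pow_one, mul_neg, mul_inv_cancel₀ hc0]
      | succ n ih =>
          rw [hrec, ih, pow_succ]
          ring
    have hlow : ∀ j : ℕ, R⁻¹ ≤ ‖PowerSeries.coeff j u‖ * R ^ j := by
      intro j
      rw [hval, norm_neg, norm_pow, norm_inv]
      have h1 : ‖c‖ ^ (j+1) ≤ R ^ (j+1) := pow_le_pow_left₀ (norm_nonneg c) hcR _
      have h2 : 0 < ‖c‖ ^ (j+1) := pow_pos (norm_pos_iff.mpr hc0) _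
      have h3 : (R ^ (j+1))⁻¹ ≤ (‖c‖ ^ (j+1))⁻¹ := by
        apply inv_anti₀ h2 h1
      have h4 : (R ^ (j+1))⁻¹ * R ^ j = R⁻¹ := by
        rw [pow_succ]
        field_simp
      calc R⁻¹ = (R ^ (j+1))⁻¹ * R ^ j := h4.symm
        _ ≤ (‖c‖ ^ (j+1))⁻¹ * R ^ j := mul_le_mul_of_nonneg_right h3 (by positivity)
        _ = ‖c‖⁻¹ ^ (j+1) * R ^ j := by rw [inv_pow]
    -- but u is the lastAxis image of an element of A(R), so its coefficients vanish
    set w : A F (m+1) R := toAm F m R (Hp.map (constAprev m R)) * e with hw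
    have hwu : lastAxis m ((w : A F (m+1) R) : MvPowerSeries (Fin (m+1)) F) = u := by
      have h11 : ((w : A F (m+1) R) : MvPowerSeries (Fin (m+1)) F)
          = ((toAm F m R (Hp.map (constAprev m R)) : A F (m+1) R) :
              MvPowerSeries (Fin (m+1)) F)
            * ((e : A F (m+1) R) : MvPowerSeries (Fin (m+1)) F) := rfl
      rw [h11, map_mul, lastAxis_toAm, hu', Polynomial.map_map]
      have h12 : ψ.comp (constAprev m R) = RingHom.id F := by
        ext a
        simp only [RingHom.comp_apply, RingHom.id_apply, hψ]
        exact psiR_constAprev a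
      rw [h12, Polynomial.map_id]
    have htend := lastAxis_tendsto (F := F) (R := R) w.2
    rw [hwu] at htend
    have hev := htend.eventually_lt_const (inv_pos.mpr hR0)
    obtain ⟨j, hj⟩ := hev.exists
    exact absurd (hlow j) (not_le.mpr hj)

end NA
end
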